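/- Let V be a Tate vector space. Then the natural map V → V** (double continuous topological dual) is an isomorphism of topological vector spaces. -/

import Mathlib

/- STATEMENT 17: Let V be a Tate vector space.  Then the natural evaluation map
V → V** into the double (continuous, topological) dual is an isomorphism of
topological vector spaces.  The continuous dual of V is modelled as the space
of linear functionals vanishing on some basic open subspace; a functional on V*
is continuous iff it vanishes on the annihilator of some c-lattice of V
(annihilators of bounded sets being the basic open subspaces of V*).  The
topological part of the statement is expressed by the fact that the evaluation
map carries each c-lattice of V exactly onto the double annihilator, i.e. onto
the corresponding c-lattice of V**. -/

section

variable {k V : Type*} [Field k] [AddCommGroup V] [Module k V]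
  [UniformSpace V] [IsUniformAddGroup V] [CompleteSpace V] [T2Space V]

/-- `P` is a c-lattice: an open bounded subspace. -/
def IsCLattice (k : Type*) [Field k] [Module k V] (P : Submodule k V) : Prop :=
  IsOpen (P : Set V) ∧
    ∀ U : Submodule k V, IsOpen (U : Set V) →
      FiniteDimensional k (↥P ⧸ Submodule.comap P.subtype (P ⊓ U))

variable (ℬ : Set (Submodule k V))
  (hopen : ∀ W ∈ ℬ, IsOpen (W : Set V))
  (hbasis : (nhds (0 : V)).HasBasis (· ∈ ℬ) (fun W => (W : Set V)))

/-- The continuous dual `V*` of the Tate space `V`: linear functionals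
vanishing on some basic open subspace. -/
def Vdual : Submodule k (Module.Dual k V) where
  carrier := {f | ∃ W ∈ ℬ, ∀ v ∈ W, f v = 0}
  zero_mem' := by
    rcases hbasis.ex_mem with ⟨W, hW⟩
    exact ⟨W, hW, fun v _ => rfl⟩
  add_mem' := by
    rintro f g ⟨W₁, hW₁, h₁⟩ ⟨W₂, hW₂, h₂⟩
    have hmem : (W₁ : Set V) ∩ (W₂ : Set V) ∈ nhds (0 : V) :=
      Filter.inter_mem
        ((hopen W₁ hW₁).mem_nhds W₁.zero_mem)
        ((hopen W₂ hW₂).mem_nhds W₂.zero_mem)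
    rcases (hbasis.mem_iff.mp hmem) with ⟨W, hW, hsub⟩
    refine ⟨W, hW, fun v hv => ?_⟩
    have hv' := hsub hv
    simp only [LinearMap.add_apply, h₁ v hv'.1, h₂ v hv'.2, add_zero]
  smul_mem' := by
    rintro t f ⟨W, hW, hf⟩
    exact ⟨W, hW, fun v hv => by simp [hf v hv]⟩

/-- The evaluation map `V → V**`. -/
def ev (v : V) : (↥(Vdual ℬ hopen hbasis) →ₗ[k] k) where
  toFun := fun f => (f : Module.Dual k V) v
  map_add' := fun f g => rfl
  map_smul' := fun t f => rfl

/-- Continuous functionals on `V*`: those vanishing on the annihilator of some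
c-lattice of `V` (the annihilators of bounded subspaces being the basic open
subspaces of `V*`). -/
def Vddual : Set (↥(Vdual ℬ hopen hbasis) →ₗ[k] k) :=
  {F | ∃ P : Submodule k V, IsCLattice k P ∧
    ∀ f : ↥(Vdual ℬ hopen hbasis),
      (∀ v ∈ P, (f : Module.Dual k V) v = 0) → F f = 0}

section Aux

omit [UniformSpace V] [IsUniformAddGroup V] [CompleteSpace V] [T2Space V] in
lemma ker_comp_subtype_eq (P W : Submodule k V) :
    LinearMap.ker (W.mkQ.comp P.subtype) = Submodule.comap P.subtype (P ⊓ W) := by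
  ext p
  simp only [LinearMap.mem_ker, LinearMap.comp_apply, Submodule.subtype_apply,
    Submodule.mkQ_apply, Submodule.Quotient.mk_eq_zero, Submodule.mem_comap,
    Submodule.mem_inf]
  exact ⟨fun h => ⟨p.2, h⟩, fun h => h.2⟩

omit [UniformSpace V] [IsUniformAddGroup V] [CompleteSpace V] [T2Space V] in
lemma range_comp_subtype_eq (P W : Submodule k V) :
    LinearMap.range (W.mkQ.comp P.subtype) = P.map W.mkQ := by
  rw [LinearMap.range_comp, Submodule.range_subtype]

/-- The quotient `P/(P ∩ W)` is isomorphic to the image of `P` in `V/W`. -/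
noncomputable def quotCompEquiv (P W : Submodule k V) :
    (↥P ⧸ Submodule.comap P.subtype (P ⊓ W)) ≃ₗ[k] ↥(P.map W.mkQ) :=
  (Submodule.quotEquivOfEq _ _ (ker_comp_subtype_eq P W).symm).trans
    ((W.mkQ.comp P.subtype).quotKerEquivRange.trans
      (LinearEquiv.ofEq _ _ (range_comp_subtype_eq P W)))

/-- A set stable under addition of elements of an open submodule is open. -/
lemma isOpen_stable {W : Submodule k V} (hW : IsOpen (W : Set V)) {S : Set V}
    (h : ∀ v ∈ S, ∀ w ∈ W, v + w ∈ S) : IsOpen S := by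
  rw [isOpen_iff_mem_nhds]
  intro v hv
  rw [← map_add_left_nhds_zero v, Filter.mem_map]
  filter_upwards [hW.mem_nhds W.zero_mem] with w hw
  exact h v hv w hw

/-- A set stable under addition of elements of an open submodule is closed. -/
lemma isClosed_stable {W : Submodule k V} (hW : IsOpen (W : Set V)) {S : Set V}
    (h : ∀ v ∈ S, ∀ w ∈ W, v + w ∈ S) : IsClosed S := by
  rw [← isOpen_compl_iff]
  apply isOpen_stable hW
  intro v hv w hw hmem
  exact hv (by simpa using h _ hmem (-w) (neg_mem hw))

lemma comp_mkQ_mem_Vdual {W : Submodule k V} (hW : W ∈ ℬ)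
    (φ : Module.Dual k (V ⧸ W)) : φ.comp W.mkQ ∈ Vdual ℬ hopen hbasis :=
  ⟨W, hW, fun w hw => by
    simp [Submodule.mkQ_apply, (Submodule.Quotient.mk_eq_zero W).mpr hw]⟩

/-- Separation: a vector killed by all functionals vanishing on `W` lies in `W`. -/
lemma vanish_mem {W : Submodule k V} (hW : W ∈ ℬ) {v : V}
    (h : ∀ f : ↥(Vdual ℬ hopen hbasis),
      (∀ w ∈ W, (f : Module.Dual k V) w = 0) → (f : Module.Dual k V) v = 0) :
    v ∈ W := by
  rw [← Submodule.Quotient.mk_eq_zero,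
    ← Module.forall_dual_apply_eq_zero_iff k (Submodule.Quotient.mk v : V ⧸ W)]
  intro φ
  have := h ⟨_, comp_mkQ_mem_Vdual ℬ hopen hbasis hW φ⟩
    (fun w hw => by simp [(Submodule.Quotient.mk_eq_zero W).mpr hw])
  simpa using this

/-- Main construction: a functional on `V*` killing the annihilator of an open
"co-finite-dimensional" submodule `P` is evaluation at some `v ∈ P`. -/
lemma exists_ev_eq (P : Submodule k V) (hP : IsOpen (P : Set V))
    (hfd : ∀ W ∈ ℬ, FiniteDimensional k ↥(P.map W.mkQ))
    (F : ↥(Vdual ℬ hopen hbasis) →ₗ[k] k)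
    (hF : ∀ f : ↥(Vdual ℬ hopen hbasis),
      (∀ v ∈ P, (f : Module.Dual k V) v = 0) → F f = 0) :
    ∃ v ∈ P, ∀ f : ↥(Vdual ℬ hopen hbasis), F f = (f : Module.Dual k V) v := by
  classical
  -- Step A: approximate solutions modulo each basic open W
  have stepA : ∀ W ∈ ℬ, ∃ v ∈ P, ∀ f : ↥(Vdual ℬ hopen hbasis),
      (∀ w ∈ W, (f : Module.Dual k V) w = 0) → F f = (f : Module.Dual k V) v := by
    intro W hW
    haveI := hfd W hW
    set Q : Submodule k (V ⧸ W) := P.map W.mkQ with hQ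
    let J : Module.Dual k (V ⧸ W) →ₗ[k] ↥(Vdual ℬ hopen hbasis) :=
      { toFun := fun φ => ⟨φ.comp W.mkQ, comp_mkQ_mem_Vdual ℬ hopen hbasis hW φ⟩
        map_add' := fun φ ψ => Subtype.ext (LinearMap.add_comp _ _ _)
        map_smul' := fun t φ => Subtype.ext (LinearMap.smul_comp _ _ _) }
    let G : Module.Dual k (V ⧸ W) →ₗ[k] k := F.comp J
    have hGker : ∀ φ : Module.Dual k (V ⧸ W), Q.dualRestrict φ = 0 → G φ = 0 := by
      intro φ hφ
      apply hF
      intro v hv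
      have h0 : φ ((⟨W.mkQ v, Submodule.mem_map_of_mem hv⟩ : Q) : V ⧸ W) = 0 := by
        rw [← Q.dualRestrict_apply φ, hφ]; rfl
      exact h0
    obtain ⟨x, hx⟩ := (Module.evalEquiv k ↥Q).surjective (G.comp (Subspace.dualLift Q))
    have key : ∀ φ : Module.Dual k (V ⧸ W), G φ = φ (x : V ⧸ W) := by
      intro φ
      have hres : Q.dualRestrict (φ - (Subspace.dualLift Q) (Q.dualRestrict φ)) = 0 := by
        rw [map_sub]
        have h3 : Q.dualRestrict ((Subspace.dualLift Q) (Q.dualRestrict φ)) = Q.dualRestrict φ := by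
          ext y
          simp [Subspace.dualLift_of_subtype]
        rw [h3, sub_self]
      have h1 : G φ - G ((Subspace.dualLift Q) (Q.dualRestrict φ)) = 0 := by
        rw [← map_sub]; exact hGker _ hres
      have h2 : G ((Subspace.dualLift Q) (Q.dualRestrict φ)) = (Q.dualRestrict φ) x := by
        have h4 := congrArg (fun T : Module.Dual k (Module.Dual k ↥Q) =>
          T (Q.dualRestrict φ)) hx
        simpa [Module.evalEquiv_apply, Module.Dual.eval_apply] using h4.symm
      rw [sub_eq_zero.mp h1, h2, Q.dualRestrict_apply]
    obtain ⟨v, hvP, hvx⟩ := Submodule.mem_map.mp x.2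
    refine ⟨v, hvP, ?_⟩
    intro f hf
    have hle : W ≤ LinearMap.ker (f : Module.Dual k V) := fun w hw => hf w hw
    have hφ : (W.liftQ (f : Module.Dual k V) hle).comp W.mkQ
        = (f : Module.Dual k V) := W.liftQ_mkQ _ _
    have hJf : J (W.liftQ (f : Module.Dual k V) hle) = f := Subtype.ext hφ
    have hFG : F f = W.liftQ (f : Module.Dual k V) hle (x : V ⧸ W) := by
      rw [← key]; exact congrArg F hJf.symm
    rw [hFG, ← hvx]
    exact congrArg (fun g : Module.Dual k V => g v) hφ
  -- Step B: glue the approximate solutions by completeness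
  let ι := {W : Submodule k V // W ∈ ℬ}
  obtain ⟨W₀, hW₀⟩ := hbasis.ex_mem
  haveI : Nonempty ι := ⟨⟨W₀, hW₀⟩⟩
  let T : ι → Set V := fun W =>
    {v | v ∈ P ∧ ∀ f : ↥(Vdual ℬ hopen hbasis),
      (∀ w ∈ W.1, (f : Module.Dual k V) w = 0) → F f = (f : Module.Dual k V) v}
  have hTne : ∀ W, (T W).Nonempty := by
    rintro ⟨W, hW⟩
    obtain ⟨v, hv, h⟩ := stepA W hW
    exact ⟨v, hv, h⟩
  have hTmono : ∀ (W₁ W₂ : ι), (W₂.1 : Set V) ⊆ (W₁.1 : Set V) → T W₂ ⊆ T W₁ := by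
    intro W₁ W₂ hsub v hv
    exact ⟨hv.1, fun f hf => hv.2 f (fun w hw => hf w (hsub hw))⟩
  have hTP : ∀ W, T W ⊆ (P : Set V) := fun W v hv => hv.1
  have hdiff : ∀ (W : ι), ∀ v ∈ T W, ∀ v' ∈ T W, v' - v ∈ W.1 := by
    intro W v hv v' hv'
    apply vanish_mem ℬ hopen hbasis W.2
    intro f hf
    rw [map_sub, ← hv'.2 f hf, ← hv.2 f hf, sub_self]
  let L : Filter V := ⨅ W : ι, Filter.principal (T W)
  have hdir : Directed (· ≥ ·) fun W : ι => Filter.principal (T W) := by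
    intro W₁ W₂
    have hmem : (W₁.1 : Set V) ∩ (W₂.1 : Set V) ∈ nhds (0 : V) :=
      Filter.inter_mem
        ((hopen W₁.1 W₁.2).mem_nhds W₁.1.zero_mem)
        ((hopen W₂.1 W₂.2).mem_nhds W₂.1.zero_mem)
    obtain ⟨W₃, hW₃, hsub⟩ := hbasis.mem_iff.mp hmem
    refine ⟨⟨W₃, hW₃⟩, ?_, ?_⟩
    · exact Filter.principal_mono.mpr
        (hTmono W₁ ⟨W₃, hW₃⟩ (fun w hw => (hsub hw).1))
    · exact Filter.principal_mono.mpr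
        (hTmono W₂ ⟨W₃, hW₃⟩ (fun w hw => (hsub hw).2))
  haveI hLne : Filter.NeBot L :=
    Filter.iInf_neBot_of_directed' hdir
      (fun W => Filter.principal_neBot_iff.mpr (hTne W))
  have hL : ∀ W : ι, T W ∈ L :=
    fun W => Filter.mem_iInf_of_mem W (Filter.mem_principal_self _)
  have hcauchy : Cauchy L := by
    rw [cauchy_iff]
    refine ⟨hLne, ?_⟩
    intro s hs
    rw [uniformity_eq_comap_nhds_zero V, Filter.mem_comap] at hs
    obtain ⟨N, hN, hNs⟩ := hs
    obtain ⟨W, hW, hWN⟩ := hbasis.mem_iff.mp hN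
    refine ⟨T ⟨W, hW⟩, hL _, ?_⟩
    rintro ⟨v, v'⟩ hp
    rw [Set.mem_prod] at hp
    exact hNs (hWN (hdiff ⟨W, hW⟩ v hp.1 v' hp.2))
  obtain ⟨x, hx⟩ := CompleteSpace.complete hcauchy
  have hxcl : ∀ W : ι, x ∈ closure (T W) := by
    intro W
    rw [mem_closure_iff_clusterPt]
    exact Filter.neBot_of_le (le_inf hx (Filter.le_principal_iff.mpr (hL W)))
  have hPc : IsClosed (P : Set V) :=
    isClosed_stable hP (fun v hv w hw => P.add_mem hv hw)
  refine ⟨x, ?_, ?_⟩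
  · have := (closure_mono (hTP ⟨W₀, hW₀⟩)) (hxcl ⟨W₀, hW₀⟩)
    rwa [hPc.closure_eq] at this
  · intro f
    obtain ⟨W, hW, hfW⟩ := f.2
    have hA : IsClosed {v : V | F f = (f : Module.Dual k V) v} := by
      apply isClosed_stable (hopen W hW)
      intro v hv w hw
      simp only [Set.mem_setOf_eq, map_add, hfW w hw, add_zero]
      exact hv
    have hsub : T ⟨W, hW⟩ ⊆ {v : V | F f = (f : Module.Dual k V) v} :=
      fun v hv => hv.2 f hfW
    exact (hA.closure_subset_iff.mpr hsub) (hxcl ⟨W, hW⟩)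

include hopen hbasis in
/-- Every vector lies in some c-lattice. -/
lemma exists_isCLattice_mem
    (hcomm : ∀ W₁ ∈ ℬ, ∀ W₂ ∈ ℬ,
      FiniteDimensional k (↥W₁ ⧸ Submodule.comap W₁.subtype (W₁ ⊓ W₂)))
    (v : V) : ∃ P : Submodule k V, IsCLattice k P ∧ v ∈ P := by
  obtain ⟨W₀, hW₀⟩ := hbasis.ex_mem
  refine ⟨W₀ ⊔ Submodule.span k {v}, ⟨?_, ?_⟩, ?_⟩
  · exact isOpen_stable (hopen W₀ hW₀)
      (fun p hp w hw => Submodule.add_mem _ hp (le_sup_left (a := W₀) hw))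
  · intro U hU
    have hmap : FiniteDimensional k ↥((W₀ ⊔ Submodule.span k {v}).map U.mkQ) := by
      obtain ⟨W₂, hW₂, hsub⟩ := hbasis.mem_iff.mp (hU.mem_nhds U.zero_mem)
      have hle : W₂ ≤ Submodule.comap LinearMap.id U := fun w hw => hsub hw
      have hcomp : U.mkQ = (Submodule.mapQ W₂ U LinearMap.id hle).comp W₂.mkQ := by
        rw [Submodule.mapQ_mkQ, LinearMap.comp_id]
      have h1 : FiniteDimensional k ↥(W₀.map U.mkQ) := by
        haveI := hcomm W₀ hW₀ W₂ hW₂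
        haveI : FiniteDimensional k ↥(W₀.map W₂.mkQ) :=
          Module.Finite.equiv (quotCompEquiv W₀ W₂)
        rw [hcomp, Submodule.map_comp]
        infer_instance
      haveI := h1
      haveI : FiniteDimensional k ↥((Submodule.span k {v}).map U.mkQ) :=
        Module.Finite.map _ _
      rw [Submodule.map_sup]
      infer_instance
    haveI := hmap
    exact Module.Finite.equiv (quotCompEquiv _ U).symm
  · exact (le_sup_right : Submodule.span k {v} ≤ _) (Submodule.mem_span_singleton_self v)

end Aux

/-- for a Tate vector space `V` the evaluation map `V → V**` is
an isomorphism of topological vector spaces: it is a linear bijection onto the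
continuous double dual, carrying each c-lattice of `V` onto the corresponding
double annihilator (a basic c-lattice of `V**`). -/
theorem tate_double_dual_iso
    (hcomm : ∀ W₁ ∈ ℬ, ∀ W₂ ∈ ℬ,
      FiniteDimensional k (↥W₁ ⧸ Submodule.comap W₁.subtype (W₁ ⊓ W₂))) :
    -- ev is linear:
    (∀ (v w : V), ev ℬ hopen hbasis (v + w) =
        ev ℬ hopen hbasis v + ev ℬ hopen hbasis w) ∧
    (∀ (t : k) (v : V), ev ℬ hopen hbasis (t • v) = t • ev ℬ hopen hbasis v) ∧
    -- ev lands in the continuous double dual and is bijective onto it: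
    (∀ v : V, ev ℬ hopen hbasis v ∈ Vddual ℬ hopen hbasis) ∧
    Function.Injective (ev (k := k) (V := V) ℬ hopen hbasis) ∧
    Set.range (ev (k := k) (V := V) ℬ hopen hbasis) = Vddual ℬ hopen hbasis ∧
    -- ev is a homeomorphism: it maps each c-lattice of V onto the
    -- corresponding basic open subspace (double annihilator) of V**:
    (∀ P : Submodule k V, IsCLattice k P →
      ev ℬ hopen hbasis '' (P : Set V) =
        {F ∈ Vddual ℬ hopen hbasis |
          ∀ f : ↥(Vdual ℬ hopen hbasis),
            (∀ v ∈ P, (f : Module.Dual k V) v = 0) → F f = 0}) := by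
  classical
  have fd_of_lattice : ∀ P : Submodule k V, IsCLattice k P →
      ∀ W ∈ ℬ, FiniteDimensional k ↥(P.map W.mkQ) := by
    intro P hP W hW
    haveI := hP.2 W (hopen W hW)
    exact Module.Finite.equiv (quotCompEquiv P W)
  refine ⟨?_, ?_, ?_, ?_, ?_, ?_⟩
  · intro v w
    exact LinearMap.ext fun f => (f : Module.Dual k V).map_add v w
  · intro t v
    exact LinearMap.ext fun f => (f : Module.Dual k V).map_smul t v
  · intro v
    obtain ⟨P, hP, hvP⟩ := exists_isCLattice_mem ℬ hopen hbasis hcomm v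
    exact ⟨P, hP, fun f hf => hf v hvP⟩
  · intro v w h
    have hall : ∀ f : ↥(Vdual ℬ hopen hbasis), (f : Module.Dual k V) (v - w) = 0 := by
      intro f
      have h1 : (f : Module.Dual k V) v = (f : Module.Dual k V) w :=
        congrArg (fun F : ↥(Vdual ℬ hopen hbasis) →ₗ[k] k => F f) h
      rw [map_sub, h1, sub_self]
    by_contra hne
    have hvw : v - w ≠ 0 := fun h0 => hne (sub_eq_zero.mp h0)
    have hcompl : ({v - w}ᶜ : Set V) ∈ nhds (0 : V) :=
      (isOpen_compl_singleton).mem_nhds (by simpa using (Ne.symm hvw))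
    obtain ⟨W, hW, hsub⟩ := hbasis.mem_iff.mp hcompl
    have : v - w ∈ W := vanish_mem ℬ hopen hbasis hW (fun f _ => hall f)
    exact hsub this rfl
  · apply Set.Subset.antisymm
    · rintro F ⟨v, rfl⟩
      obtain ⟨P, hP, hvP⟩ := exists_isCLattice_mem ℬ hopen hbasis hcomm v
      exact ⟨P, hP, fun f hf => hf v hvP⟩
    · rintro F ⟨P, hP, hFP⟩
      obtain ⟨v, _, hev⟩ := exists_ev_eq ℬ hopen hbasis P hP.1
        (fd_of_lattice P hP) F hFP
      exact ⟨v, LinearMap.ext fun f => (hev f).symm⟩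
  · intro P hP
    apply Set.Subset.antisymm
    · rintro F ⟨v, hvP, rfl⟩
      exact ⟨⟨P, hP, fun f hf => hf v hvP⟩, fun f hf => hf v hvP⟩
    · rintro F ⟨_, hFP⟩
      obtain ⟨v, hv, hev⟩ := exists_ev_eq ℬ hopen hbasis P hP.1
        (fd_of_lattice P hP) F hFP
      exact ⟨v, hv, LinearMap.ext fun f => (hev f).symm⟩

end
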